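/- Let n > k ≥ 2 and let S = {(a b) : a ∈ [k], b ∈ [n] \ [k]} be the set of all transpositions in S_n swapping an element of [k] with an element of [n] \ [k]. Then every real eigenvalue of the adjacency matrix of the arrangement graph A(n,k,1) is a real eigenvalue of the adjacency matrix of the Cayley graph Γ(S_n, S). -/

import Mathlib

open Finset

/-- The restriction of `u⁻¹` to the first `k` points, as an embedding. -/
def pimap {n k : ℕ} (h : k ≤ n) (u : Equiv.Perm (Fin n)) : Fin k ↪ Fin n :=
  ⟨fun i => u⁻¹ (Fin.castLE h i), fun i j hij =>
    Fin.castLE_injective h ((u⁻¹).injective hij)⟩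

lemma pimap_apply {n k : ℕ} (h : k ≤ n) (u : Equiv.Perm (Fin n)) (i : Fin k) :
    pimap h u i = u⁻¹ (Fin.castLE h i) := rfl

lemma pimap_swap_eq_iff {n k : ℕ} (h : k ≤ n) (u : Equiv.Perm (Fin n))
    {a b : Fin n} (ha : (a : ℕ) < k) (hb : k ≤ (b : ℕ)) (i : Fin k) :
    pimap h (Equiv.swap a b * u) i = pimap h u i ↔ (i : ℕ) ≠ (a : ℕ) := by
  have hx : ((Fin.castLE h i : Fin n) : ℕ) = (i : ℕ) := rfl
  rw [pimap_apply, pimap_apply, mul_inv_rev, Equiv.Perm.mul_apply,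
    Equiv.swap_inv]
  constructor
  · intro heq hia
    have : Equiv.swap a b (Fin.castLE h i) = Fin.castLE h i := u⁻¹.injective heq
    have hxa : (Fin.castLE h i : Fin n) = a := by
      apply Fin.ext; rw [hx, hia]
    rw [hxa, Equiv.swap_apply_left] at this
    have : (b : ℕ) = (a : ℕ) := by rw [this]
    omega
  · intro hia
    have hxa : (Fin.castLE h i : Fin n) ≠ a := fun hc => hia (by rw [← hc]; rfl)
    have hxb : (Fin.castLE h i : Fin n) ≠ b := by
      intro hc
      have : ((Fin.castLE h i : Fin n) : ℕ) = (b : ℕ) := by rw [hc]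
      rw [hx] at this
      omega
    rw [Equiv.swap_apply_of_ne_of_ne hxa hxb]

lemma pimap_swap_apply_self {n k : ℕ} (h : k ≤ n) (u : Equiv.Perm (Fin n))
    {a b : Fin n} (ha : (a : ℕ) < k) :
    pimap h (Equiv.swap a b * u) ⟨(a : ℕ), ha⟩ = u⁻¹ b := by
  have hxa : (Fin.castLE h (⟨(a : ℕ), ha⟩ : Fin k) : Fin n) = a := by
    apply Fin.ext; rfl
  rw [pimap_apply, mul_inv_rev, Equiv.Perm.mul_apply, Equiv.swap_inv, hxa,
    Equiv.swap_apply_left]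

lemma pimap_surjective {n k : ℕ} (h : k ≤ n) (p : Fin k ↪ Fin n) :
    ∃ u : Equiv.Perm (Fin n), pimap h u = p := by
  classical
  let e₂ : Fin k ↪ Fin n := ⟨Fin.castLE h, Fin.castLE_injective h⟩
  let eq1 : (Set.range ⇑p) ≃ (Set.range ⇑e₂) :=
    (Equiv.ofInjective p p.injective).symm.trans (Equiv.ofInjective e₂ e₂.injective)
  have hcard : Fintype.card ((Set.range ⇑p)ᶜ : Set (Fin n)) =
      Fintype.card ((Set.range ⇑e₂)ᶜ : Set (Fin n)) := by
    rw [Fintype.card_compl_set, Fintype.card_compl_set,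
      Fintype.card_congr (Equiv.ofInjective p p.injective).symm,
      Fintype.card_congr (Equiv.ofInjective e₂ e₂.injective).symm]
  let eq2 : ((Set.range ⇑p)ᶜ : Set (Fin n)) ≃ ((Set.range ⇑e₂)ᶜ : Set (Fin n)) :=
    Fintype.equivOfCardEq hcard
  let U : Equiv.Perm (Fin n) := (Equiv.Set.sumCompl (Set.range ⇑p)).symm.trans
    ((eq1.sumCongr eq2).trans (Equiv.Set.sumCompl (Set.range ⇑e₂)))
  refine ⟨U, ?_⟩
  apply DFunLike.ext
  intro i
  have h1 : (Equiv.Set.sumCompl (Set.range ⇑p)).symm (p i)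
      = Sum.inl ⟨p i, Set.mem_range_self i⟩ :=
    Equiv.Set.sumCompl_symm_apply_of_mem (Set.mem_range_self i)
  have h2 : eq1 ⟨p i, Set.mem_range_self i⟩ = ⟨e₂ i, Set.mem_range_self i⟩ := by
    simp only [eq1, Equiv.trans_apply]
    rw [Equiv.ofInjective_symm_apply p.injective i]
    rfl
  have key : U (p i) = Fin.castLE h i := by
    show (Equiv.Set.sumCompl (Set.range ⇑e₂))
      ((eq1.sumCongr eq2) ((Equiv.Set.sumCompl (Set.range ⇑p)).symm (p i))) = _
    rw [h1, Equiv.sumCongr_apply, Sum.map_inl, h2, Equiv.Set.sumCompl_apply_inl]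
    rfl
  rw [pimap_apply, ← key, Equiv.Perm.inv_def, Equiv.symm_apply_apply]

theorem stmt_19 {n k : ℕ} (hk : 2 ≤ k) (hkn : k < n)
    (A : SimpleGraph (Fin k ↪ Fin n)) [DecidableRel A.Adj]
    (hA : ∀ p q : Fin k ↪ Fin n, A.Adj p q ↔
      (Finset.univ.filter fun i : Fin k => p i ≠ q i).card = 1)
    (Γ : SimpleGraph (Equiv.Perm (Fin n))) [DecidableRel Γ.Adj]
    (hΓ : ∀ u v : Equiv.Perm (Fin n), Γ.Adj u v ↔
      ∃ a b : Fin n, (a : ℕ) < k ∧ k ≤ (b : ℕ) ∧ v * u⁻¹ = Equiv.swap a b) :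
    ∀ μ ∈ spectrum ℝ (A.adjMatrix ℝ), μ ∈ spectrum ℝ (Γ.adjMatrix ℝ) := by
  classical
  intro μ hμ
  rw [spectrum.mem_iff] at hμ ⊢
  -- extract an eigenvector of A
  have hdetA : ((algebraMap ℝ (Matrix (Fin k ↪ Fin n) (Fin k ↪ Fin n) ℝ)) μ
      - A.adjMatrix ℝ).det = 0 := by
    by_contra hd
    exact hμ ((Matrix.isUnit_iff_isUnit_det _).mpr (Ne.isUnit hd))
  obtain ⟨f, hf0, hf⟩ := Matrix.exists_mulVec_eq_zero_iff.mpr hdetA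
  have hAf : ∀ p : Fin k ↪ Fin n, (A.adjMatrix ℝ).mulVec f p = μ * f p := by
    intro p
    have h1 := congrFun hf p
    simp only [Matrix.sub_mulVec, Algebra.algebraMap_eq_smul_one,
      Matrix.smul_mulVec, Matrix.one_mulVec, Pi.sub_apply, Pi.smul_apply,
      smul_eq_mul, Pi.zero_apply, sub_eq_zero] at h1
    linarith [h1]
  -- the pulled-back vector
  set g : Equiv.Perm (Fin n) → ℝ := fun u => f (pimap hkn.le u) with hg
  have hg0 : g ≠ 0 := by
    intro hc
    apply hf0
    funext p
    obtain ⟨u, hu⟩ := pimap_surjective hkn.le p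
    have := congrFun hc u
    simpa [hg, hu] using this
  -- key sum identity
  have hsum : ∀ u : Equiv.Perm (Fin n),
      ∑ v ∈ Γ.neighborFinset u, g v = ∑ q ∈ A.neighborFinset (pimap hkn.le u), f q := by
    intro u
    apply Finset.sum_bij (fun v _ => pimap hkn.le v)
    · -- maps into target
      intro v hv
      show pimap hkn.le v ∈ A.neighborFinset (pimap hkn.le u)
      rw [SimpleGraph.mem_neighborFinset] at hv ⊢
      obtain ⟨a, b, ha, hb, hvu⟩ := (hΓ u v).mp hv
      have hveq : v = Equiv.swap a b * u := by
        rw [← hvu]; group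
      rw [hA]
      have hfil : (Finset.univ.filter fun i : Fin k =>
          pimap hkn.le u i ≠ pimap hkn.le v i) = {(⟨(a : ℕ), ha⟩ : Fin k)} := by
        ext i
        simp only [mem_filter, mem_univ, true_and, mem_singleton, hveq, ne_comm (a := pimap hkn.le u i)]
        rw [ne_eq, pimap_swap_eq_iff hkn.le u ha hb, not_not, Fin.ext_iff]
      rw [hfil, Finset.card_singleton]
    · -- injective
      intro v₁ hv₁ v₂ hv₂ h12'
      have h12 : pimap hkn.le v₁ = pimap hkn.le v₂ := h12'
      rw [SimpleGraph.mem_neighborFinset] at hv₁ hv₂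
      obtain ⟨a₁, b₁, ha₁, hb₁, hvu₁⟩ := (hΓ u v₁).mp hv₁
      obtain ⟨a₂, b₂, ha₂, hb₂, hvu₂⟩ := (hΓ u v₂).mp hv₂
      have hveq₁ : v₁ = Equiv.swap a₁ b₁ * u := by rw [← hvu₁]; group
      have hveq₂ : v₂ = Equiv.swap a₂ b₂ * u := by rw [← hvu₂]; group
      have haa : a₁ = a₂ := by
        by_contra hne
        have h1 : pimap hkn.le v₁ ⟨(a₁ : ℕ), ha₁⟩ ≠ pimap hkn.le u ⟨(a₁ : ℕ), ha₁⟩ := by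
          rw [hveq₁, ne_eq, pimap_swap_eq_iff hkn.le u ha₁ hb₁, not_not]
        have h2 : pimap hkn.le v₂ ⟨(a₁ : ℕ), ha₁⟩ = pimap hkn.le u ⟨(a₁ : ℕ), ha₁⟩ := by
          rw [hveq₂, pimap_swap_eq_iff hkn.le u ha₂ hb₂]
          intro hc
          exact hne (Fin.ext hc)
        rw [h12] at h1
        exact h1 h2
      subst haa
      have hbb : b₁ = b₂ := by
        have h1 : pimap hkn.le v₁ ⟨(a₁ : ℕ), ha₁⟩ = u⁻¹ b₁ := by
          rw [hveq₁]; exact pimap_swap_apply_self hkn.le u ha₁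
        have h2 : pimap hkn.le v₂ ⟨(a₁ : ℕ), ha₁⟩ = u⁻¹ b₂ := by
          rw [hveq₂]; exact pimap_swap_apply_self hkn.le u ha₁
        rw [h12, h2] at h1
        exact u⁻¹.injective h1.symm
      rw [hveq₁, hveq₂, hbb]
    · -- surjective
      intro q hq
      rw [SimpleGraph.mem_neighborFinset, hA] at hq
      obtain ⟨i₀, hi₀⟩ := Finset.card_eq_one.mp hq
      have hmem : pimap hkn.le u i₀ ≠ q i₀ := by
        have : i₀ ∈ Finset.univ.filter fun i : Fin k => pimap hkn.le u i ≠ q i := by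
          rw [hi₀]; exact Finset.mem_singleton_self i₀
        exact (Finset.mem_filter.mp this).2
      have huniq : ∀ i : Fin k, pimap hkn.le u i ≠ q i → i = i₀ := by
        intro i hi
        have : i ∈ Finset.univ.filter fun i : Fin k => pimap hkn.le u i ≠ q i :=
          Finset.mem_filter.mpr ⟨Finset.mem_univ _, hi⟩
        rw [hi₀] at this
        exact Finset.mem_singleton.mp this
      set a : Fin n := Fin.castLE hkn.le i₀ with hadef
      have ha : (a : ℕ) < k := i₀.isLt
      set b : Fin n := u (q i₀) with hbdef
      have hb : k ≤ (b : ℕ) := by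
        by_contra hbk
        push_neg at hbk
        set j : Fin k := ⟨(b : ℕ), hbk⟩ with hjdef
        have hcast : Fin.castLE hkn.le j = b := Fin.ext rfl
        have hpj : pimap hkn.le u j = q i₀ := by
          rw [pimap_apply, hcast, hbdef, Equiv.Perm.inv_def, Equiv.symm_apply_apply]
        by_cases hji : j = i₀
        · rw [hji] at hpj
          exact hmem hpj
        · have : pimap hkn.le u j = q j := by
            by_contra hc
            exact hji (huniq j hc)
          rw [hpj] at this
          exact hji (q.injective this.symm)
      refine ⟨Equiv.swap a b * u, ?_, ?_⟩
      · rw [SimpleGraph.mem_neighborFinset, hΓ]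
        exact ⟨a, b, ha, hb, by group⟩
      · apply DFunLike.ext
        intro i
        by_cases hia : (i : ℕ) = (a : ℕ)
        · have hii : i = i₀ := Fin.ext hia
          have hmk : (⟨(a : ℕ), ha⟩ : Fin k) = i₀ := Fin.ext rfl
          rw [hii, ← hmk, pimap_swap_apply_self hkn.le u ha, hbdef,
            Equiv.Perm.inv_def, Equiv.symm_apply_apply, ← hii]
          exact congrArg q (hii.trans hmk.symm)
        · have h1 : pimap hkn.le (Equiv.swap a b * u) i = pimap hkn.le u i :=
            (pimap_swap_eq_iff hkn.le u ha hb i).mpr hia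
          have h2 : pimap hkn.le u i = q i := by
            by_contra hc
            exact hia (by rw [huniq i hc]; rfl)
          rw [h1, h2]
    · intro v hv
      rfl
  -- g is an eigenvector of Γ
  have hΓg : ∀ u : Equiv.Perm (Fin n), (Γ.adjMatrix ℝ).mulVec g u = μ * g u := by
    intro u
    rw [SimpleGraph.adjMatrix_mulVec_apply, hsum u,
      ← SimpleGraph.adjMatrix_mulVec_apply, hAf]
  -- conclude
  intro hunit
  have hdet : ((algebraMap ℝ (Matrix (Equiv.Perm (Fin n)) (Equiv.Perm (Fin n)) ℝ)) μ
      - Γ.adjMatrix ℝ).det = 0 := by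
    rw [← Matrix.exists_mulVec_eq_zero_iff]
    refine ⟨g, hg0, ?_⟩
    funext u
    simp only [Matrix.sub_mulVec, Algebra.algebraMap_eq_smul_one,
      Matrix.smul_mulVec, Matrix.one_mulVec, Pi.sub_apply, Pi.smul_apply,
      smul_eq_mul, Pi.zero_apply, hΓg u]
    ring
  rw [Matrix.isUnit_iff_isUnit_det] at hunit
  rw [hdet] at hunit
  exact (by simpa using hunit : IsUnit (0 : ℝ)).ne_zero rfl
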